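/- Every prestress stable second-order well-positioned framework in a normed space is second-order rigid: if (u,u') is a second-order flex, i.e., u ∈ ker df_G(p) and Δ_{p_v−p_w}(u_v−u_w,u_v−u_w) + φ_{p_v−p_w}(u'_v−u'_w) = 0 for all edges vw, then u ∈ 𝒯(p). Key computation: for any equilibrium stress a and any second-order flex (u,u'), H_a(u) = Σ_{vw∈E} a_{vw} Δ_{p_v−p_w}(u_v−u_w,u_v−u_w) = 0. -/
import Mathlib


open Filter Asymptotics

/-- `φ` and `Δ` are the derivative and (symmetric) Hessian of the norm of `X` at `x`. -/
def IsSecondDerivOfNormAt {X : Type*} [NormedAddCommGroup X] [NormedSpace ℝ X]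
    (φ : X →L[ℝ] ℝ) (Δ : X →L[ℝ] X →L[ℝ] ℝ) (x : X) : Prop :=
  (∀ u v : X, Δ u v = Δ v u) ∧
    (fun h : X => ‖x + h‖ - ‖x‖ - φ h - (1 / 2) * Δ h h) =o[nhds 0] fun h : X => ‖h‖ ^ 2

/-- `a` is a (normalised) equilibrium stress of the framework. -/
def IsEquilibriumStress {V E X : Type*} [Fintype E] [DecidableEq V]
    [NormedAddCommGroup X] [NormedSpace ℝ X]
    (ends : E → V × V) (φ : E → (X →L[ℝ] ℝ)) (a : E → ℝ) : Prop :=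
  ∀ v : V, ∑ e : E,
    ((if (ends e).1 = v then a e else 0) - (if (ends e).2 = v then a e else 0)) • φ e
      = (0 : X →L[ℝ] ℝ)

/-- The framework is prestress stable. -/
def PrestressStable {V E X : Type*} [Fintype V] [Fintype E] [DecidableEq V]
    [NormedAddCommGroup X] [NormedSpace ℝ X]
    (ends : E → V × V) (φ : E → (X →L[ℝ] ℝ)) (Δ : E → (X →L[ℝ] X →L[ℝ] ℝ))
    (T : Submodule ℝ (V → X)) : Prop :=
  ∃ a b : E → ℝ, IsEquilibriumStress ends φ a ∧ (∀ e : E, 0 < b e) ∧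
    (∀ u : V → X, 0 ≤ ∑ e : E,
      (a e * Δ e (u (ends e).1 - u (ends e).2) (u (ends e).1 - u (ends e).2)
        + b e * (φ e (u (ends e).1 - u (ends e).2)) ^ 2)) ∧
    (∀ u : V → X, (∑ e : E,
      (a e * Δ e (u (ends e).1 - u (ends e).2) (u (ends e).1 - u (ends e).2)
        + b e * (φ e (u (ends e).1 - u (ends e).2)) ^ 2)) = 0 ↔ u ∈ T)

/-- Every prestress stable second-order well-positioned framework is second-order rigid:
if `(u,u')` is a second-order flex, i.e. `u ∈ ker df_G(p)` and
`Δ_{p_v−p_w}(u_v−u_w,u_v−u_w) + φ_{p_v−p_w}(u'_v−u'_w) = 0` for all edges `vw`,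
then `u ∈ 𝒯(p)`. -/
theorem stmt11 {V E X : Type*} [Fintype V] [Fintype E] [DecidableEq V]
    [NormedAddCommGroup X] [NormedSpace ℝ X] [FiniteDimensional ℝ X]
    (ends : E → V × V) (p : V → X)
    (φ : E → (X →L[ℝ] ℝ)) (Δ : E → (X →L[ℝ] X →L[ℝ] ℝ))
    (hsd : ∀ e : E, IsSecondDerivOfNormAt (φ e) (Δ e) (p (ends e).1 - p (ends e).2))
    (T : Submodule ℝ (V → X))
    (hps : PrestressStable ends φ Δ T) :
    ∀ u u' : V → X,
      (∀ e : E, φ e (u (ends e).1 - u (ends e).2) = 0) →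
      (∀ e : E, Δ e (u (ends e).1 - u (ends e).2) (u (ends e).1 - u (ends e).2)
        + φ e (u' (ends e).1 - u' (ends e).2) = 0) →
      u ∈ T := by
  intro u u' h1 h2
  obtain ⟨a, b, heq, hb, _, hiff⟩ := hps
  apply (hiff u).1
  have key : ∑ e : E, a e * φ e (u' (ends e).1 - u' (ends e).2) = 0 := by
    calc ∑ e : E, a e * φ e (u' (ends e).1 - u' (ends e).2)
        = ∑ e : E, ∑ v : V,
            ((if (ends e).1 = v then a e else 0) - (if (ends e).2 = v then a e else 0))
              * φ e (u' v) := by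
          refine Finset.sum_congr rfl fun e _ => ?_
          rw [Finset.sum_congr rfl (fun v _ => sub_mul _ _ _), Finset.sum_sub_distrib]
          simp [Finset.sum_ite_eq, map_sub, mul_sub]
      _ = ∑ v : V, ∑ e : E,
            ((if (ends e).1 = v then a e else 0) - (if (ends e).2 = v then a e else 0))
              * φ e (u' v) := Finset.sum_comm
      _ = 0 := by
          refine Finset.sum_eq_zero fun v _ => ?_
          have := congrArg (fun L : X →L[ℝ] ℝ => L (u' v)) (heq v)
          simpa [ContinuousLinearMap.sum_apply] using this
  calc ∑ e : E,
      (a e * Δ e (u (ends e).1 - u (ends e).2) (u (ends e).1 - u (ends e).2)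
        + b e * (φ e (u (ends e).1 - u (ends e).2)) ^ 2)
      = ∑ e : E, -(a e * φ e (u' (ends e).1 - u' (ends e).2)) := by
        refine Finset.sum_congr rfl fun e _ => ?_
        have h2e := h2 e
        have : Δ e (u (ends e).1 - u (ends e).2) (u (ends e).1 - u (ends e).2)
            = -φ e (u' (ends e).1 - u' (ends e).2) := by linarith
        rw [this, h1 e]
        ring
    _ = 0 := by rw [Finset.sum_neg_distrib, key, neg_zero]
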